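/- Let F be a field and n, k, m ∈ ℕ with 1 ≤ k ≤ n−2 and k ∣ m, and set p = (n−k)·m/k. Suppose matrices M_{i,j} ∈ F^{p×m} are given for all i ≠ j ∈ [n] with rank(M_{i,j}) = m/k for every i ≠ j, such that the code with parity vectors P_j(x) = Σ_{i≠j} M_{i,j}·x_i is reconstructible from every S ⊆ [n] with |S| = k. Then the total number of nonzero entries of all the matrices {M_{i,j}}_{i≠j∈[n]} is at least n·m·(n−k) + n·(k−1)·m/k. Consequently the update complexity θ (this total divided by n·m) satisfies θ ≥ (n−k) + (k−1)/k. -/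

import Mathlib

open Finset

open Classical in
lemma nnz_bound {F : Type*} [Field F] [DecidableEq F] {p m : ℕ}
    (A : Matrix (Fin p) (Fin m) F) :
    (univ.filter fun c : Fin m => ∃ r, A r c ≠ 0).card
      + (univ.filter fun r : Fin p => ∃ c : Fin m, A r c ≠ 0).card
    ≤ (univ.filter fun rc : Fin p × Fin m => A rc.1 rc.2 ≠ 0).card + A.rank := by
  classical
  rcases Nat.eq_zero_or_pos p with hp | hp
  · have : IsEmpty (Fin p) := by rw [hp]; infer_instance
    simp
  rcases Nat.eq_zero_or_pos m with hm | hm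
  · have : IsEmpty (Fin m) := by rw [hm]; infer_instance
    simp
  have : Nonempty (Fin p) := ⟨⟨0, hp⟩⟩
  have : Nonempty (Fin m) := ⟨⟨0, hm⟩⟩
  obtain ⟨s, hst, hspan, hli⟩ := exists_linearIndependent F (Set.range A)
  have hsfin : s.Finite := (Set.finite_range A).subset hst
  letI : Fintype s := hsfin.fintype
  have hscard : s.toFinset.card = A.rank := by
    rw [Matrix.rank_eq_finrank_span_row, show Set.range A.row = Set.range A from rfl, ← hspan,
      finrank_span_set_eq_card hli]
  -- choose a row index for each element of s
  have hpre : ∀ v ∈ s, ∃ r : Fin p, A r = v := fun v hv => hst hv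
  let g : (Fin m → F) → Fin p := fun v =>
    if h : ∃ r : Fin p, A r = v then h.choose else Classical.arbitrary _
  have hg : ∀ v ∈ s, A (g v) = v := by
    intro v hv
    have h : ∃ r : Fin p, A r = v := hpre v hv
    simp only [g, dif_pos h]
    exact h.choose_spec
  let R₀ : Finset (Fin p) := s.toFinset.image g
  have hR₀card : R₀.card ≤ A.rank := by
    calc R₀.card ≤ s.toFinset.card := Finset.card_image_le
    _ = A.rank := hscard
  -- key covering property
  have hcover : ∀ c : Fin m, (∃ r, A r c ≠ 0) → ∃ r ∈ R₀, A r c ≠ 0 := by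
    intro c ⟨r, hr⟩
    by_contra hno
    push_neg at hno
    have hs0 : ∀ v ∈ s, v c = 0 := by
      intro v hv
      have := hno (g v) (Finset.mem_image_of_mem g (Set.mem_toFinset.mpr hv))
      rwa [hg v hv] at this
    have hker : Submodule.span F s ≤ LinearMap.ker (LinearMap.proj c : (Fin m → F) →ₗ[F] F) := by
      rw [Submodule.span_le]
      intro v hv
      simpa using hs0 v hv
    have hmem : A r ∈ Submodule.span F s := by
      rw [hspan]
      exact Submodule.subset_span (Set.mem_range_self r)
    have := hker hmem
    simp only [LinearMap.mem_ker, LinearMap.proj_apply] at this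
    exact hr this
  set Sup := univ.filter fun rc : Fin p × Fin m => A rc.1 rc.2 ≠ 0 with hSup
  -- injection from nonzero columns into Sup ∩ R₀ rows
  have h1 : (univ.filter fun c : Fin m => ∃ r, A r c ≠ 0).card
      ≤ (Sup.filter fun rc => rc.1 ∈ R₀).card := by
    apply Finset.card_le_card_of_injOn
      (fun c => (if h : ∃ r ∈ R₀, A r c ≠ 0 then h.choose else Classical.arbitrary _, c))
    · intro c hc
      simp only [mem_coe, mem_filter, mem_univ, true_and] at hc
      have h := hcover c hc
      simp only [mem_coe, dif_pos h, mem_filter, mem_univ, true_and, hSup]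
      exact ⟨h.choose_spec.2, h.choose_spec.1⟩
    · intro c₁ _ c₂ _ h
      exact congrArg Prod.snd h
  -- injection from nonzero rows outside R₀
  have h2 : ((univ.filter fun r : Fin p => ∃ c, A r c ≠ 0) \ R₀).card
      ≤ (Sup.filter fun rc => rc.1 ∉ R₀).card := by
    apply Finset.card_le_card_of_injOn
      (fun r => (r, if h : ∃ c, A r c ≠ 0 then h.choose else Classical.arbitrary _))
    · intro r hr
      simp only [mem_coe, mem_sdiff, mem_filter, mem_univ, true_and] at hr
      obtain ⟨h, hR⟩ := hr
      simp only [mem_coe, dif_pos h, mem_filter, mem_univ, true_and, hSup]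
      exact ⟨h.choose_spec, hR⟩
    · intro r₁ _ r₂ _ h
      exact congrArg Prod.fst h
  have h3 : (Sup.filter fun rc => rc.1 ∈ R₀).card + (Sup.filter fun rc => rc.1 ∉ R₀).card
      = Sup.card := Finset.card_filter_add_card_filter_not _
  have h4 : (univ.filter fun r : Fin p => ∃ c, A r c ≠ 0).card
      ≤ ((univ.filter fun r : Fin p => ∃ c, A r c ≠ 0) \ R₀).card + R₀.card :=
    Finset.card_le_card_sdiff_add_card
  omega

lemma stmt9_aux {F : Type*} [Field F] [DecidableEq F] (n k u p m : ℕ)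
    (hk1 : 1 ≤ k) (hn : k + 2 ≤ n) (hp : p = (n - k) * u) (hm : m = k * u)
    (M : Fin n → Fin n → Matrix (Fin p) (Fin m) F)
    (hrank : ∀ i j : Fin n, i ≠ j → (M i j).rank = u)
    (hrec : ∀ S : Finset (Fin n), S.card = k →
      Function.Injective fun x : Fin n → Fin m → F =>
        ((fun j : {j : Fin n // j ∈ S} => x j.1),
         (fun j : {j : Fin n // j ∈ S} =>
           ∑ i ∈ Finset.univ.erase j.1, (M i j.1).mulVec (x i)))) :
    n * m * (n - k) + n * ((k - 1) * u) ≤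
      ∑ i, ∑ j ∈ Finset.univ.erase i,
        (Finset.univ.filter
          (fun rc : Fin p × Fin m => M i j rc.1 rc.2 ≠ 0)).card := by
  classical
  have hk0 : 0 < k := hk1
  -- column claim
  have colclaim : ∀ (i : Fin n) (c : Fin m),
      n - k ≤ ((univ.erase i).filter fun j => ∃ r : Fin p, M i j r c ≠ 0).card := by
    intro i c
    have hneg : ((univ.erase i).filter fun j => ¬ ∃ r : Fin p, M i j r c ≠ 0).card ≤ k - 1 := by
      by_contra hcon
      rw [not_le] at hcon
      have hk' : k ≤ ((univ.erase i).filter fun j => ¬ ∃ r : Fin p, M i j r c ≠ 0).card := by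
        omega
      obtain ⟨S, hSsub, hScard⟩ := Finset.exists_subset_card_eq hk'
      have hiS : i ∉ S := by
        intro hiS'
        exact (Finset.mem_erase.mp (Finset.mem_filter.mp (hSsub hiS')).1).1 rfl
      have hSzero : ∀ j ∈ S, ∀ r : Fin p, M i j r c = 0 := by
        intro j hj r
        have h2 := (Finset.mem_filter.mp (hSsub hj)).2
        push_neg at h2
        exact h2 r
      set x : Fin n → Fin m → F := fun i' => if i' = i then Pi.single c 1 else 0 with hx
      have hx0 : x = 0 := by
        apply hrec S hScard
        simp only [Prod.mk.injEq]
        constructor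
        · funext j'
          have hne : (j' : Fin n) ≠ i := fun h => hiS (h ▸ j'.2)
          simp [hx, hne]
        · funext j'
          have hL : ∑ i' ∈ univ.erase (j' : Fin n), (M i' j'.1).mulVec (x i') = 0 := by
            apply Finset.sum_eq_zero
            intro i' _
            by_cases hii : i' = i
            · subst hii
              rw [hx]
              simp only [if_pos rfl, Matrix.mulVec_single]
              funext r
              simp [hSzero j'.1 j'.2 r]
            · simp [hx, if_neg hii]
          rw [hL]
          exact (Finset.sum_eq_zero fun i' _ => by simp).symm
      have h1 : x i c = 0 := by rw [hx0]; rfl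
      rw [hx] at h1
      simp at h1
    have hpos := Finset.card_filter_add_card_filter_not
      (s := univ.erase i) (p := fun j => ∃ r : Fin p, M i j r c ≠ 0)
    rw [Finset.card_erase_of_mem (Finset.mem_univ i), Finset.card_univ, Fintype.card_fin] at hpos
    omega
  -- row claim
  have rowclaim : ∀ (j : Fin n) (r : Fin p),
      k ≤ ((univ.erase j).filter fun i => ∃ c : Fin m, M i j r c ≠ 0).card := by
    intro j r
    by_contra hcon
    push_neg at hcon
    set Y := (univ.erase j).filter fun i => ∃ c : Fin m, M i j r c ≠ 0 with hY
    have hjY : j ∉ Y := by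
      intro h
      exact (Finset.mem_erase.mp (Finset.mem_filter.mp h).1).1 rfl
    have hins : (insert j Y).card ≤ k := by
      rw [Finset.card_insert_of_notMem hjY]; omega
    obtain ⟨S, hSsub, hScard⟩ := Finset.exists_superset_card_eq hins
      (by rw [Fintype.card_fin]; omega)
    have hjS : j ∈ S := hSsub (Finset.mem_insert_self _ _)
    have hYS : ∀ i ∈ Y, i ∈ S := fun i hi => hSsub (Finset.mem_insert_of_mem hi)
    let ext : ({i : Fin n // i ∉ S} → Fin m → F) → (Fin n → Fin m → F) :=
      fun y i => if h : i ∈ S then 0 else y ⟨i, h⟩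
    have hext_add : ∀ y z, ext (y + z) = ext y + ext z := by
      intro y z; funext i'
      by_cases h : i' ∈ S <;> simp [ext, h]
    have hext_smul : ∀ (t : F) (y), ext (t • y) = t • ext y := by
      intro t y; funext i'
      by_cases h : i' ∈ S <;> simp [ext, h]
    let Φ : ({i : Fin n // i ∉ S} → Fin m → F) →ₗ[F] ({j' : Fin n // j' ∈ S} → Fin p → F) :=
      { toFun := fun y j' => ∑ i ∈ univ.erase (j' : Fin n), (M i j'.1).mulVec (ext y i)
        map_add' := by
          intro y z
          funext j'
          simp only [hext_add, Pi.add_apply, Matrix.mulVec_add]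
          exact Finset.sum_add_distrib
        map_smul' := by
          intro t y
          funext j'
          simp only [hext_smul, Pi.smul_apply, Matrix.mulVec_smul, RingHom.id_apply]
          exact (Finset.smul_sum).symm }
    have hΦ : ∀ y j', Φ y j' = ∑ i ∈ univ.erase (j' : Fin n), (M i j'.1).mulVec (ext y i) :=
      fun y j' => rfl
    have hinj : Function.Injective Φ := by
      intro y z hyz
      have h2 : ext y = ext z := by
        apply hrec S hScard
        simp only [Prod.mk.injEq]
        refine ⟨funext fun j'' => ?_, ?_⟩
        · simp [ext, dif_pos j''.2]
        · exact hyz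
      funext i'
      have h3 := congrFun h2 i'.1
      simpa [ext, dif_neg i'.2] using h3
    have hc1 : Fintype.card {i : Fin n // i ∉ S} = n - k := by
      simp [Fintype.card_subtype_compl, hScard]
    have hc2 : Fintype.card {j' : Fin n // j' ∈ S} = k := by
      simp [hScard]
    have hfr : Module.finrank F ({i : Fin n // i ∉ S} → Fin m → F)
        = Module.finrank F ({j' : Fin n // j' ∈ S} → Fin p → F) := by
      simp only [Module.finrank_pi_fintype, Module.finrank_pi, Finset.sum_const,
        smul_eq_mul, Finset.card_univ, Fintype.card_fin, hc1, hc2]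
      rw [hm, hp]; ring
    have hsurj := (LinearMap.injective_iff_surjective_of_finrank_eq_finrank hfr).mp hinj
    obtain ⟨y, hy⟩ := hsurj
      (fun j' : {j' : Fin n // j' ∈ S} => if (j' : Fin n) = j then Pi.single r 1 else 0)
    have h1 : Φ y ⟨j, hjS⟩ r = 1 := by
      rw [hy]; simp
    have h0 : Φ y ⟨j, hjS⟩ r = 0 := by
      rw [hΦ]
      rw [Finset.sum_apply]
      apply Finset.sum_eq_zero
      intro i hi
      by_cases hiS : i ∈ S
      · simp [ext, dif_pos hiS]
      · have hiY : i ∉ Y := fun h => hiS (hYS i h)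
        have hrow : ∀ c, M i j r c = 0 := by
          intro c
          by_contra hc
          exact hiY (Finset.mem_filter.mpr ⟨hi, ⟨c, hc⟩⟩)
        simp [Matrix.mulVec, dotProduct, hrow]
    rw [h1] at h0
    exact one_ne_zero h0
  set a : Fin n → Fin n → ℕ :=
    fun i j => (univ.filter fun c : Fin m => ∃ r : Fin p, M i j r c ≠ 0).card with ha
  set b : Fin n → Fin n → ℕ :=
    fun i j => (univ.filter fun r : Fin p => ∃ c : Fin m, M i j r c ≠ 0).card with hb
  set T : ℕ := ∑ i, ∑ j ∈ univ.erase i,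
      (univ.filter (fun rc : Fin p × Fin m => M i j rc.1 rc.2 ≠ 0)).card with hT
  -- per matrix bound, summed
  have step1 : ∑ i, ∑ j ∈ univ.erase i, (a i j + b i j) ≤ T + n * ((n-1) * u) := by
    have h1 : ∑ i, ∑ j ∈ univ.erase i, (a i j + b i j)
        ≤ ∑ i, ∑ j ∈ univ.erase i,
          ((univ.filter (fun rc : Fin p × Fin m => M i j rc.1 rc.2 ≠ 0)).card + u) := by
      apply Finset.sum_le_sum
      intro i _
      apply Finset.sum_le_sum
      intro j hj
      have hne : i ≠ j := fun h => (Finset.mem_erase.mp hj).1 h.symm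
      have h2 := nnz_bound (M i j)
      rw [hrank i j hne] at h2
      exact h2
    refine h1.trans (le_of_eq ?_)
    calc ∑ i, ∑ j ∈ univ.erase i,
          ((univ.filter (fun rc : Fin p × Fin m => M i j rc.1 rc.2 ≠ 0)).card + u)
        = ∑ i, ((∑ j ∈ univ.erase i,
            (univ.filter (fun rc : Fin p × Fin m => M i j rc.1 rc.2 ≠ 0)).card) + (n-1) * u) := by
          apply Finset.sum_congr rfl
          intro i _
          rw [Finset.sum_add_distrib, Finset.sum_const, smul_eq_mul,
            Finset.card_erase_of_mem (mem_univ i), Finset.card_univ, Fintype.card_fin]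
      _ = T + n * ((n-1) * u) := by
          rw [Finset.sum_add_distrib, Finset.sum_const, smul_eq_mul,
            Finset.card_univ, Fintype.card_fin, hT]
  -- column sums
  have step2 : n * (m * (n - k)) ≤ ∑ i, ∑ j ∈ univ.erase i, a i j := by
    have h1 : ∀ i : Fin n, m * (n - k) ≤ ∑ j ∈ univ.erase i, a i j := by
      intro i
      have e1 : ∑ j ∈ univ.erase i, a i j
          = ∑ c : Fin m, ((univ.erase i).filter fun j => ∃ r : Fin p, M i j r c ≠ 0).card := by
        simp only [ha, Finset.card_filter]
        rw [Finset.sum_comm]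
      rw [e1]
      calc m * (n - k) = ∑ _c : Fin m, (n - k) := by
            rw [Finset.sum_const, smul_eq_mul, Finset.card_univ, Fintype.card_fin]
        _ ≤ _ := Finset.sum_le_sum fun c _ => colclaim i c
    calc n * (m * (n-k)) = ∑ _i : Fin n, m * (n-k) := by
          rw [Finset.sum_const, smul_eq_mul, Finset.card_univ, Fintype.card_fin]
      _ ≤ _ := Finset.sum_le_sum fun i _ => h1 i
  -- row sums
  have step3 : n * (p * k) ≤ ∑ i, ∑ j ∈ univ.erase i, b i j := by
    have hswap : ∑ i, ∑ j ∈ univ.erase i, b i j = ∑ j, ∑ i ∈ univ.erase j, b i j := by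
      apply Finset.sum_comm'
      intro i j
      simp only [Finset.mem_univ, Finset.mem_erase, true_and, and_true]
      exact ne_comm
    rw [hswap]
    have h1 : ∀ j : Fin n, p * k ≤ ∑ i ∈ univ.erase j, b i j := by
      intro j
      have e1 : ∑ i ∈ univ.erase j, b i j
          = ∑ r : Fin p, ((univ.erase j).filter fun i => ∃ c : Fin m, M i j r c ≠ 0).card := by
        simp only [hb, Finset.card_filter]
        rw [Finset.sum_comm]
        congr!
      rw [e1]
      calc p * k = ∑ _r : Fin p, k := by
            rw [Finset.sum_const, smul_eq_mul, Finset.card_univ, Fintype.card_fin]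
        _ ≤ _ := Finset.sum_le_sum fun r _ => rowclaim j r
    calc n * (p * k) = ∑ _j : Fin n, p * k := by
          rw [Finset.sum_const, smul_eq_mul, Finset.card_univ, Fintype.card_fin]
      _ ≤ _ := Finset.sum_le_sum fun j _ => h1 j
  -- final arithmetic
  have harith : (k - 1) + (n - 1) ≤ (n - k) * k := by
    have h2 : 2 ≤ n - k := by omega
    have e1 : (n - k) * k = (n - k) * (k - 1) + (n - k) := by
      have hkk : k = (k - 1) + 1 := by omega
      rw [hkk, Nat.mul_add, Nat.mul_one, Nat.add_sub_cancel]
    have e2 : 2 * (k - 1) ≤ (n - k) * (k - 1) := Nat.mul_le_mul_right _ h2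
    omega
  have hsplit : ∑ i, ∑ j ∈ univ.erase i, (a i j + b i j)
      = (∑ i, ∑ j ∈ univ.erase i, a i j) + (∑ i, ∑ j ∈ univ.erase i, b i j) := by
    rw [← Finset.sum_add_distrib]
    apply Finset.sum_congr rfl
    intro i _
    rw [Finset.sum_add_distrib]
  -- combine
  have hchain : n * (m * (n-k)) + n * (p * k) ≤ T + n * ((n-1) * u) :=
    calc n * (m * (n-k)) + n * (p * k)
        ≤ (∑ i, ∑ j ∈ univ.erase i, a i j) + (∑ i, ∑ j ∈ univ.erase i, b i j) :=
          Nat.add_le_add step2 step3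
      _ = ∑ i, ∑ j ∈ univ.erase i, (a i j + b i j) := hsplit.symm
      _ ≤ T + n * ((n-1) * u) := step1
  have hineq : n * m * (n-k) + n * ((k-1) * u) + n * ((n-1) * u)
      ≤ n * (m * (n-k)) + n * (p * k) := by
    have e3 : n * (p * k) = n * ((n-k) * k * u) := by rw [hp]; ring
    have e4 : n * ((k-1) * u) + n * ((n-1) * u) ≤ n * ((n-k) * k * u) := by
      have h5 : (k-1) * u + (n-1) * u ≤ (n-k) * k * u := by
        have h6 := Nat.mul_le_mul_right u harith
        rwa [Nat.add_mul] at h6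
      calc n * ((k-1) * u) + n * ((n-1) * u) = n * ((k-1) * u + (n-1) * u) := by ring
        _ ≤ n * ((n-k) * k * u) := Nat.mul_le_mul_left n h5
    have e5 : n * m * (n - k) = n * (m * (n-k)) := by ring
    omega
  have hfin := le_trans hineq hchain
  exact Nat.le_of_add_le_add_right hfin

/-- Lower bound on the update complexity of `(n,k,m·1)` MR-MUB codes: the total
number of nonzero entries of the construction matrices is at least
`n·m·(n-k) + n·((k-1)·m/k)`, i.e. `θ ≥ (n-k) + (k-1)/k`. -/
theorem stmt9 {F : Type*} [Field F] [DecidableEq F] (n k m : ℕ)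
    (hk1 : 1 ≤ k) (hk2 : k ≤ n - 2) (hdvd : k ∣ m)
    (M : Fin n → Fin n → Matrix (Fin ((n - k) * m / k)) (Fin m) F)
    (hrank : ∀ i j : Fin n, i ≠ j → (M i j).rank = m / k)
    (hrec : ∀ S : Finset (Fin n), S.card = k →
      Function.Injective fun x : Fin n → Fin m → F =>
        ((fun j : {j : Fin n // j ∈ S} => x j.1),
         (fun j : {j : Fin n // j ∈ S} =>
           ∑ i ∈ Finset.univ.erase j.1, (M i j.1).mulVec (x i)))) :
    n * m * (n - k) + n * ((k - 1) * m / k) ≤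
      ∑ i, ∑ j ∈ Finset.univ.erase i,
        (Finset.univ.filter
          (fun rc : Fin ((n - k) * m / k) × Fin m => M i j rc.1 rc.2 ≠ 0)).card := by
  classical
  obtain ⟨u, hm⟩ := hdvd
  have hk0 : 0 < k := hk1
  have hn : k + 2 ≤ n := by omega
  subst hm
  have hu : k * u / k = u := Nat.mul_div_cancel_left u hk0
  have hpe : (n - k) * (k * u) / k = (n - k) * u := by
    rw [Nat.mul_div_assoc _ (Dvd.intro u rfl), hu]
  have hq : (k - 1) * (k * u) / k = (k - 1) * u := by
    rw [Nat.mul_div_assoc _ (Dvd.intro u rfl), hu]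
  rw [hq]
  exact stmt9_aux n k u _ _ hk1 hn hpe rfl M (fun i j hij => by rw [hrank i j hij, hu]) hrec
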